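/- Let N be a positive natural number, Ĵ ∈ ℝᴺˣᴺ a constant skew-symmetric matrix, H : ℝᴺ → ℝ continuously differentiable, and Δt ∈ ℝ. If a⁰, a¹ ∈ ℝᴺ satisfy the Average Vector Field step a¹ − a⁰ = Δt · ∫₀¹ Ĵ ∇H((1−ξ) a⁰ + ξ a¹) dξ, then H(a¹) = H(a⁰). (The AVF scheme with constant Poisson matrix exactly preserves the Hamiltonian.) -/

import Mathlib

open Matrix

/-- If `Ĵ` is a constant skew-symmetric matrix, `H` is continuously
differentiable and `a⁰, a¹` satisfy the Average Vector Field step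
`a¹ − a⁰ = Δt ∫₀¹ Ĵ ∇H((1−ξ)a⁰ + ξa¹) dξ`, then `H(a¹) = H(a⁰)`: the AVF scheme with constant
Poisson matrix exactly preserves the Hamiltonian. -/
theorem stmt_14 (N : ℕ) (hN : 0 < N)
    (Jh : Matrix (Fin N) (Fin N) ℝ) (hskew : Jhᵀ = -Jh)
    (H : EuclideanSpace ℝ (Fin N) → ℝ) (hH : ContDiff ℝ 1 H)
    (Δt : ℝ) (a0 a1 : EuclideanSpace ℝ (Fin N))
    (hstep : a1 - a0 = Δt • ∫ ξ in (0:ℝ)..1,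
      (WithLp.toLp 2 (Jh.mulVec (gradient H ((1 - ξ) • a0 + ξ • a1) : EuclideanSpace ℝ (Fin N))) :
        EuclideanSpace ℝ (Fin N))) :
    H a1 = H a0 := by
  classical
  set γ : ℝ → EuclideanSpace ℝ (Fin N) := fun ξ => (1 - ξ) • a0 + ξ • a1 with hγ
  set g : ℝ → EuclideanSpace ℝ (Fin N) := fun ξ => gradient H (γ ξ) with hg
  -- continuity of the gradient map
  have hgradc : Continuous fun x : EuclideanSpace ℝ (Fin N) => gradient H x := by
    have h1 : Continuous fun x : EuclideanSpace ℝ (Fin N) => fderiv ℝ H x :=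
      hH.continuous_fderiv one_ne_zero
    have h2 := (InnerProductSpace.toDual ℝ (EuclideanSpace ℝ (Fin N))).symm.continuous
    exact h2.comp h1
  have hγc : Continuous γ := by fun_prop
  have hgc : Continuous g := hgradc.comp hγc
  have hgi : IntervalIntegrable g MeasureTheory.volume 0 1 := hgc.intervalIntegrable 0 1
  -- derivative of H ∘ γ
  have hderiv : ∀ ξ : ℝ, HasDerivAt (fun t => H (γ t))
      (inner ℝ (g ξ) (a1 - a0) : ℝ) ξ := by
    intro ξ
    have h1 : HasDerivAt (fun t : ℝ => (1 - t) • a0) ((-1 : ℝ) • a0) ξ :=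
      ((hasDerivAt_id ξ).const_sub 1).smul_const a0
    have h2 : HasDerivAt (fun t : ℝ => t • a1) ((1 : ℝ) • a1) ξ :=
      (hasDerivAt_id ξ).smul_const a1
    have hγd : HasDerivAt γ (a1 - a0) ξ := by
      have h3 := h1.add h2
      rw [neg_one_smul, one_smul, neg_add_eq_sub] at h3
      exact h3
    have hgrad : HasGradientAt H (g ξ) (γ ξ) :=
      ((hH.differentiable one_ne_zero) (γ ξ)).hasGradientAt
    have := hgrad.hasFDerivAt.comp_hasDerivAt ξ hγd
    simp [InnerProductSpace.toDual_apply_apply] at this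
    exact this
  -- FTC
  have hFTC : ∫ ξ in (0:ℝ)..1, (inner ℝ (g ξ) (a1 - a0) : ℝ) = H (γ 1) - H (γ 0) := by
    refine intervalIntegral.integral_eq_sub_of_hasDerivAt (fun ξ _ => hderiv ξ) ?_
    exact (Continuous.intervalIntegrable (by
      exact (continuous_inner.comp (hgc.prodMk continuous_const)) ) 0 1)
  -- pull inner out of the integral
  set G : EuclideanSpace ℝ (Fin N) := ∫ ξ in (0:ℝ)..1, g ξ with hG
  have hinner : ∫ ξ in (0:ℝ)..1, (inner ℝ (g ξ) (a1 - a0) : ℝ)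
      = inner ℝ G (a1 - a0) := by
    have := (innerSL ℝ (a1 - a0)).intervalIntegral_comp_comm hgi
    have e1 : ∀ ξ : ℝ, (inner ℝ (g ξ) (a1 - a0) : ℝ) = (innerSL ℝ (a1 - a0)) (g ξ) := by
      intro ξ; exact real_inner_comm _ _
    calc ∫ ξ in (0:ℝ)..1, (inner ℝ (g ξ) (a1 - a0) : ℝ)
        = ∫ ξ in (0:ℝ)..1, (innerSL ℝ (a1 - a0)) (g ξ) := by simp_rw [e1]
      _ = (innerSL ℝ (a1 - a0)) G := this
      _ = inner ℝ G (a1 - a0) := by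
          simp only [innerSL_apply_apply]; exact real_inner_comm _ _
  -- express the AVF integral via G
  set L : EuclideanSpace ℝ (Fin N) →L[ℝ] EuclideanSpace ℝ (Fin N) :=
    LinearMap.toContinuousLinearMap (Matrix.toEuclideanLin Jh) with hL
  have hLapp : ∀ v : EuclideanSpace ℝ (Fin N),
      L v = (WithLp.toLp 2 (Jh.mulVec (v : EuclideanSpace ℝ (Fin N))) : EuclideanSpace ℝ (Fin N)) := by
    intro v; rfl
  have hbridge : (∫ ξ in (0:ℝ)..1,
      (WithLp.toLp 2 (Jh.mulVec (gradient H ((1 - ξ) • a0 + ξ • a1) : EuclideanSpace ℝ (Fin N))) :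
        EuclideanSpace ℝ (Fin N))) = L G := by
    have hfi : IntervalIntegrable (fun ξ => L (g ξ)) MeasureTheory.volume 0 1 :=
      (L.continuous.comp hgc).intervalIntegrable 0 1
    have hcomm := (PiLp.continuousLinearEquiv 2 ℝ
      (fun _ : Fin N => ℝ)).toContinuousLinearMap.intervalIntegral_comp_comm hfi
    have h2 : (∫ ξ in (0:ℝ)..1, L (g ξ)) = L G := L.intervalIntegral_comp_comm hgi
    exact h2
  have hstep' : a1 - a0 = Δt • L G := by
    rw [hstep, hbridge]
  -- skew-symmetry kills the inner product
  have hskew0 : (inner ℝ G (L G) : ℝ) = 0 := by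
    have hdot : (inner ℝ G (L G) : ℝ) = dotProduct (fun i => G i) (Jh.mulVec fun i => G i) := by
      rw [hLapp]
      simp [PiLp.inner_apply, dotProduct, mul_comm]
    have h2 : dotProduct (fun i => G i) (Jh.mulVec fun i => G i)
        = - dotProduct (fun i => G i) (Jh.mulVec fun i => G i) := by
      conv_lhs => rw [Matrix.dotProduct_mulVec, ← Matrix.mulVec_transpose, hskew]
      simp [Matrix.neg_mulVec, dotProduct_comm]
    have := h2
    rw [hdot]
    linarith [h2]
  have hzero : (inner ℝ G (a1 - a0) : ℝ) = 0 := by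
    rw [hstep', inner_smul_right, hskew0, mul_zero]
  have : H (γ 1) - H (γ 0) = 0 := by rw [← hFTC, hinner, hzero]
  have hγ1 : γ 1 = a1 := by simp [hγ]
  have hγ0 : γ 0 = a0 := by simp [hγ]
  rw [hγ1, hγ0] at this
  linarith
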